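/- arXiv:1811.03295 — 2 statements merged into one kernel-verified Lean document; each statement's English description precedes it below -/
import Mathlib

section
/- Let g = Σ_i g_i m_i be a polynomial of degree at most k on an (n-j)-dimensional face F of diameter h_F, expanded in the scaled monomial basis M_k(F) = {((x - x_F)/h_F)^α : α ∈ A_{n-j}, |α| ≤ k}. Then the norm equivalence h_F^{(n-j)/2} ‖g⃗‖_{ℓ²} ≲ ‖g‖_{0,F} ≲ h_F^{(n-j)/2} ‖g⃗‖_{ℓ²} holds, where g⃗ = (g_i) is the coefficient vector and the constants depend only on k, n, j, and the chunkiness parameter of F. -/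
open MeasureTheory
noncomputable section

abbrev Eu (d : ℕ) := EuclideanSpace ℝ (Fin d)

namespace Stmt18
variable (d k : ℕ)


def Adm : Finset (Fin d → Fin (k + 1)) :=
  Finset.univ.filter (fun α : Fin d → Fin (k + 1) => ∑ i, (α i : ℕ) ≤ k)

def pol (z : Eu d) (a : (Fin d → Fin (k + 1)) → ℝ) (y : Eu d) : ℝ :=
  ∑ α ∈ Adm d k, a α * ∏ i, (y i - z i) ^ (α i : ℕ)

lemma abs_coord_le (y : Eu d) (i : Fin d) : |y i| ≤ ‖y‖ := by
  rw [EuclideanSpace.norm_eq]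
  have h1 : |y i| = Real.sqrt (|y i| ^ 2) := by
    rw [Real.sqrt_sq (abs_nonneg _)]
  rw [h1]
  apply Real.sqrt_le_sqrt
  have := Finset.single_le_sum (f := fun j => ‖y j‖ ^ 2)
    (fun j _ => sq_nonneg _) (Finset.mem_univ i)
  simpa [Real.norm_eq_abs] using this

lemma abs_coord_sub_le_dist (x y : Eu d) (i : Fin d) : |x i - y i| ≤ dist x y := by
  have := abs_coord_le d (x - y) i
  rwa [dist_eq_norm, ← PiLp.sub_apply] at *
  
lemma continuous_pol_aux :
    Continuous (fun q : (Eu d × ((Fin d → Fin (k + 1)) → ℝ)) × Eu d =>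
      pol d k q.1.1 q.1.2 q.2) := by
  unfold pol
  refine continuous_finset_sum _ (fun α _ => Continuous.mul ?_ ?_)
  · exact (continuous_apply α).comp (continuous_snd.comp continuous_fst)
  · refine continuous_finset_prod _ (fun i _ => Continuous.pow ?_ _)
    exact ((EuclideanSpace.proj i).continuous.comp continuous_snd).sub
      (((EuclideanSpace.proj i).continuous.comp (continuous_fst.comp continuous_fst)))

lemma continuous_pol (z : Eu d) (a : (Fin d → Fin (k + 1)) → ℝ) :
    Continuous (pol d k z a) := by
  have := (continuous_pol_aux d k).comp
    (Continuous.prodMk (continuous_const (y := (z, a))) continuous_id)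
  exact this

lemma analyticOnNhd_pol (z : Eu d) (a : (Fin d → Fin (k + 1)) → ℝ) :
    AnalyticOnNhd ℝ (pol d k z a) Set.univ := by
  unfold pol
  refine Finset.analyticOnNhd_fun_sum _ (fun α _ => AnalyticOnNhd.mul (analyticOnNhd_const (𝕜 := ℝ) (E := Eu d) (v := a α)) ?_)
  refine Finset.analyticOnNhd_fun_prod _ (fun i _ => AnalyticOnNhd.pow ?_ _)
  exact ((EuclideanSpace.proj (𝕜 := ℝ) i).analyticOnNhd _).sub analyticOnNhd_const


open MvPolynomial in
lemma vanish {ρ : ℝ} (hρ : 0 < ρ) (z : Eu d) (a : (Fin d → Fin (k + 1)) → ℝ)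
    (h : ∀ y ∈ Metric.ball (0 : Eu d) ρ, pol d k z a y = 0) :
    ∀ α ∈ Adm d k, a α = 0 := by
  set P : MvPolynomial (Fin d) ℝ :=
    ∑ α ∈ Adm d k, C (a α) * ∏ i, (X i - C (z i)) ^ (α i : ℕ) with hP
  have heval : ∀ y : Eu d, eval (fun i => y i) P = pol d k z a y := by
    intro y
    simp [hP, pol, eval_prod]
  -- pol vanishes everywhere
  have hzero : ∀ y : Eu d, pol d k z a y = 0 := by
    have h0 : Set.EqOn (pol d k z a) 0 Set.univ := by
      apply (analyticOnNhd_pol d k z a).eqOn_zero_of_preconnected_of_eventuallyEq_zero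
        isPreconnected_univ (Set.mem_univ (0 : Eu d))
      exact Filter.eventuallyEq_of_mem (Metric.ball_mem_nhds _ hρ) h
    intro y; exact h0 (Set.mem_univ y)
  have hPzero : P = 0 := by
    apply MvPolynomial.funext
    intro v
    have := heval ((EuclideanSpace.equiv (Fin d) ℝ).symm v)
    rw [hzero] at this
    simpa using this
  -- shift
  set T : MvPolynomial (Fin d) ℝ →ₐ[ℝ] MvPolynomial (Fin d) ℝ :=
    aeval (fun i => X i + C (z i)) with hT
  have hTP : T P = ∑ α ∈ Adm d k, C (a α) * ∏ i, (X i : MvPolynomial (Fin d) ℝ) ^ (α i : ℕ) := by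
    rw [hP, map_sum]
    refine Finset.sum_congr rfl (fun α _ => ?_)
    rw [map_mul, map_prod]
    congr 1
    · simp [hT]
    · refine Finset.prod_congr rfl (fun i _ => ?_)
      rw [map_pow, map_sub, hT]
      simp
  have hTP0 : (∑ α ∈ Adm d k, C (a α) * ∏ i, (X i : MvPolynomial (Fin d) ℝ) ^ (α i : ℕ)) = 0 := by
    rw [← hTP, hPzero, map_zero]
  -- extract coefficients
  intro α hα
  have hmono : ∀ β : Fin d → Fin (k + 1),
      (C (a β) * ∏ i, (X i : MvPolynomial (Fin d) ℝ) ^ (β i : ℕ)) =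
        monomial (Finsupp.equivFunOnFinite.symm (fun i => (β i : ℕ))) (a β) := by
    intro β
    set m : Fin d →₀ ℕ := Finsupp.equivFunOnFinite.symm (fun i => (β i : ℕ)) with hm
    have h1 : (∏ i, (X i : MvPolynomial (Fin d) ℝ) ^ (β i : ℕ)) = monomial m 1 := by
      rw [← prod_X_pow_eq_monomial]
      symm
      apply Finset.prod_subset (Finset.subset_univ _)
      intro i _ hi
      have : m i = 0 := by simpa using Finsupp.notMem_support_iff.1 hi
      have hmi : m i = (β i : ℕ) := by simp [hm]
      rw [hmi] at this ⊢
      simp [this]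
    rw [h1, C_mul_monomial, mul_one]
  have hcoeff := congrArg (coeff (Finsupp.equivFunOnFinite.symm (fun i => (α i : ℕ)))) hTP0
  rw [coeff_sum] at hcoeff
  simp only [hmono, coeff_monomial, coeff_zero] at hcoeff
  rw [Finset.sum_eq_single_of_mem α hα] at hcoeff
  · simpa using hcoeff
  · intro β _ hβα
    rw [if_neg]
    intro hEq
    apply hβα
    have := Finsupp.equivFunOnFinite.symm.injective hEq
    funext i
    have := congrFun this i
    exact Fin.val_injective this

def Phi (ρ : ℝ) (q : Eu d × ((Fin d → Fin (k + 1)) → ℝ)) : ℝ :=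
  ∫ y in Metric.ball (0 : Eu d) ρ, (pol d k q.1 q.2 y) ^ 2

lemma integrableOn_of_cont (f : Eu d → ℝ) (hf : Continuous f) {s : Set (Eu d)}
    (hs : Bornology.IsBounded s) : IntegrableOn f s := by
  obtain ⟨R, hR⟩ := hs.subset_closedBall 0
  exact (hf.continuousOn.integrableOn_compact (isCompact_closedBall 0 R)).mono_set hR

lemma Phi_pos {ρ : ℝ} (hρ : 0 < ρ) (z : Eu d) (a : (Fin d → Fin (k + 1)) → ℝ)
    (hA : ∃ α ∈ Adm d k, a α ≠ 0) : 0 < Phi d k ρ (z, a) := by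
  rw [Phi, setIntegral_pos_iff_support_of_nonneg_ae]
  · obtain ⟨y₀, hy₀b, hy₀⟩ : ∃ y₀ ∈ Metric.ball (0 : Eu d) ρ, pol d k z a y₀ ≠ 0 := by
      by_contra hcon
      push_neg at hcon
      obtain ⟨α, hα, hαne⟩ := hA
      exact hαne (vanish d k hρ z a hcon α hα)
    set U := {y | pol d k z a y ≠ 0} ∩ Metric.ball (0 : Eu d) ρ with hU
    have hUopen : IsOpen U :=
      (isOpen_ne_fun (continuous_pol d k z a) continuous_const).inter Metric.isOpen_ball
    have hUpos : 0 < volume U := hUopen.measure_pos volume ⟨y₀, hy₀, hy₀b⟩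
    refine lt_of_lt_of_le hUpos (measure_mono ?_)
    rintro y ⟨hy1, hy2⟩
    exact ⟨pow_ne_zero 2 hy1, hy2⟩
  · exact Filter.Eventually.of_forall (fun y => sq_nonneg _)
  · exact integrableOn_of_cont d _ ((continuous_pol d k z a).pow 2) Metric.isBounded_ball

lemma pol_bound (z : Eu d) (a : (Fin d → Fin (k + 1)) → ℝ) (y : Eu d) :
    |pol d k z a y| ≤ ((Adm d k).card : ℝ) * ‖a‖ * (1 + ‖y‖ + ‖z‖) ^ k := by
  have hny : (0:ℝ) ≤ ‖y‖ := norm_nonneg _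
  have hnz : (0:ℝ) ≤ ‖z‖ := norm_nonneg _
  have hbase1 : (1 : ℝ) ≤ 1 + ‖y‖ + ‖z‖ := by linarith
  have hbase0 : (0 : ℝ) ≤ 1 + ‖y‖ + ‖z‖ := by positivity
  calc |pol d k z a y| ≤ ∑ α ∈ Adm d k, |a α * ∏ i, (y i - z i) ^ (α i : ℕ)| :=
        Finset.abs_sum_le_sum_abs _ _
    _ ≤ ∑ α ∈ Adm d k, ‖a‖ * (1 + ‖y‖ + ‖z‖) ^ k := by
        refine Finset.sum_le_sum (fun α hα => ?_)
        rw [abs_mul]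
        refine mul_le_mul (norm_le_pi_norm a α) ?_ (abs_nonneg _) (norm_nonneg _)
        rw [Finset.abs_prod]
        calc (∏ i, |(y i - z i) ^ (α i : ℕ)|)
            ≤ ∏ i, (1 + ‖y‖ + ‖z‖) ^ (α i : ℕ) := by
              refine Finset.prod_le_prod (fun i _ => abs_nonneg _) (fun i _ => ?_)
              rw [abs_pow]
              refine pow_le_pow_left₀ (abs_nonneg _) ?_ _
              calc |y i - z i| ≤ |y i| + |z i| := abs_sub _ _
                _ ≤ 1 + ‖y‖ + ‖z‖ := by
                    have h1 := abs_coord_le d y i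
                    have h2 := abs_coord_le d z i
                    linarith
          _ = (1 + ‖y‖ + ‖z‖) ^ (∑ i, (α i : ℕ)) := by
              rw [← Finset.prod_pow_eq_pow_sum]
          _ ≤ (1 + ‖y‖ + ‖z‖) ^ k := by
              apply pow_le_pow_right₀ hbase1
              simpa [Adm] using hα
    _ = ((Adm d k).card : ℝ) * ‖a‖ * (1 + ‖y‖ + ‖z‖) ^ k := by
        rw [Finset.sum_const, nsmul_eq_mul, mul_assoc]

lemma continuous_Phi {ρ : ℝ} (hρ : 0 < ρ) : Continuous (Phi d k ρ) := by
  rw [continuous_iff_continuousAt]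
  intro q₀
  have hball : Metric.ball q₀ 1 ∈ nhds q₀ := Metric.ball_mem_nhds _ one_pos
  set B : ℝ := (((Adm d k).card : ℝ) * (‖q₀.2‖ + 1) * (1 + ρ + (‖q₀.1‖ + 1)) ^ k) ^ 2 with hB
  apply continuousAt_of_dominated (bound := fun _ => B)
  · exact Filter.Eventually.of_forall (fun q =>
      (((continuous_pol d k q.1 q.2).pow 2).aestronglyMeasurable).restrict)
  · filter_upwards [hball] with q hq
    filter_upwards [ae_restrict_mem measurableSet_ball] with y hy
    have hd : dist q q₀ < 1 := hq
    have hq1 : ‖q.1‖ ≤ ‖q₀.1‖ + 1 := by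
      have h1 : dist q.1 q₀.1 ≤ dist q q₀ := by
        rw [Prod.dist_eq]; exact le_max_left _ _
      have h2 : ‖q.1‖ - ‖q₀.1‖ ≤ ‖q.1 - q₀.1‖ := norm_sub_norm_le _ _
      rw [← dist_eq_norm] at h2
      linarith
    have hq2 : ‖q.2‖ ≤ ‖q₀.2‖ + 1 := by
      have h1 : dist q.2 q₀.2 ≤ dist q q₀ := by
        rw [Prod.dist_eq]; exact le_max_right _ _
      have h2 : ‖q.2‖ - ‖q₀.2‖ ≤ ‖q.2 - q₀.2‖ := norm_sub_norm_le _ _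
      rw [← dist_eq_norm] at h2
      linarith
    have hm : ‖y‖ < ρ := by rwa [Metric.mem_ball, dist_zero_right] at hy
    have hN : (0:ℝ) ≤ ((Adm d k).card : ℝ) := Nat.cast_nonneg _
    have hB0 : |pol d k q.1 q.2 y| ≤
        ((Adm d k).card : ℝ) * (‖q₀.2‖ + 1) * (1 + ρ + (‖q₀.1‖ + 1)) ^ k := by
      refine (pol_bound d k q.1 q.2 y).trans ?_
      have h3 : (0:ℝ) ≤ 1 + ‖y‖ + ‖q.1‖ := by positivity
      refine mul_le_mul (mul_le_mul le_rfl hq2 (norm_nonneg _) hN)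
        (pow_le_pow_left₀ h3 (by linarith) k) (by positivity) (by positivity)
    rw [Real.norm_eq_abs, abs_pow, hB]
    exact pow_le_pow_left₀ (abs_nonneg _) hB0 2
  · exact integrableOn_const measure_ball_lt_top.ne
  · filter_upwards [ae_restrict_mem measurableSet_ball] with y _
    have h1 : Continuous (fun q : Eu d × ((Fin d → Fin (k + 1)) → ℝ) =>
        pol d k q.1 q.2 y) := by
      have h2 := (continuous_pol_aux d k).comp
        (Continuous.prodMk continuous_id (continuous_const (y := y)))
      exact h2
    exact (h1.pow 2).continuousAt

lemma zero_mem_Adm : (fun _ => (0 : Fin (k + 1))) ∈ Adm d k := by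
  simp [Adm]

lemma exists_eps {ρ : ℝ} (hρ : 0 < ρ) :
    ∃ ε > 0, ∀ z : Eu d, ‖z‖ ≤ (d : ℝ) → ∀ a : (Fin d → Fin (k + 1)) → ℝ,
      (∀ α, α ∉ Adm d k → a α = 0) → (∑ α ∈ Adm d k, a α ^ 2 = 1) →
      ε ≤ Phi d k ρ (z, a) := by
  classical
  set S : Set ((Fin d → Fin (k + 1)) → ℝ) :=
    {a | (∀ α, α ∉ Adm d k → a α = 0) ∧ ∑ α ∈ Adm d k, a α ^ 2 = 1} with hS
  have hSclosed : IsClosed S := by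
    apply IsClosed.inter
    · show IsClosed {a : (Fin d → Fin (k + 1)) → ℝ | ∀ α, α ∉ Adm d k → a α = 0}
      have : {a : (Fin d → Fin (k + 1)) → ℝ | ∀ α, α ∉ Adm d k → a α = 0} =
          ⋂ α, {a : (Fin d → Fin (k + 1)) → ℝ | α ∉ Adm d k → a α = 0} := by
        ext a; simp
      rw [this]
      refine isClosed_iInter (fun α => ?_)
      by_cases hα : α ∈ Adm d k
      · simp only [hα, not_true_eq_false]
        simp
      · have : {a : (Fin d → Fin (k + 1)) → ℝ | α ∉ Adm d k → a α = 0} =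
            {a : (Fin d → Fin (k + 1)) → ℝ | a α = 0} := by
          ext a; simp [hα]
        rw [this]
        exact isClosed_eq (continuous_apply α) continuous_const
    · show IsClosed {a : (Fin d → Fin (k + 1)) → ℝ | ∑ α ∈ Adm d k, a α ^ 2 = 1}
      exact isClosed_eq (continuous_finset_sum _
        (fun α _ => (continuous_apply α).pow 2)) continuous_const
  have hSbdd : Bornology.IsBounded S := by
    apply Bornology.IsBounded.subset (Metric.isBounded_closedBall (x := 0) (r := 1))
    intro a ⟨h1, h2⟩
    rw [Metric.mem_closedBall, dist_zero_right]
    rw [pi_norm_le_iff_of_nonneg zero_le_one]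
    intro α
    by_cases hα : α ∈ Adm d k
    · rw [Real.norm_eq_abs, ← sq_le_one_iff_abs_le_one]
      calc a α ^ 2 ≤ ∑ β ∈ Adm d k, a β ^ 2 :=
            Finset.single_le_sum (f := fun β => a β ^ 2) (fun β _ => sq_nonneg _) hα
        _ = 1 := h2
    · simp [h1 α hα]
  have hScomp : IsCompact S := Metric.isCompact_of_isClosed_isBounded hSclosed hSbdd
  set a₀ : (Fin d → Fin (k + 1)) → ℝ :=
    fun α => if α = (fun _ => (0 : Fin (k + 1))) then 1 else 0 with ha₀
  have ha₀S : a₀ ∈ S := by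
    constructor
    · intro α hα
      have hne : α ≠ (fun _ => (0 : Fin (k + 1))) := by
        intro hEq; rw [hEq] at hα; exact hα (zero_mem_Adm d k)
      simp [ha₀, hne]
    · rw [Finset.sum_eq_single_of_mem _ (zero_mem_Adm d k)]
      · simp [ha₀]
      · intro β _ hβ
        simp [ha₀, hβ]
  set K : Set (Eu d × ((Fin d → Fin (k + 1)) → ℝ)) :=
    Metric.closedBall 0 (d : ℝ) ×ˢ S with hK
  have hKcomp : IsCompact K := (isCompact_closedBall _ _).prod hScomp
  have hKne : K.Nonempty := ⟨(0, a₀), by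
    constructor
    · simp [Metric.mem_closedBall]
    · exact ha₀S⟩
  obtain ⟨q, hqK, hqmin⟩ := hKcomp.exists_isMinOn hKne (continuous_Phi d k hρ).continuousOn
  refine ⟨Phi d k ρ q, ?_, ?_⟩
  · obtain ⟨hq1, hq2, hq3⟩ := hqK
    have : ∃ α ∈ Adm d k, q.2 α ≠ 0 := by
      by_contra hcon
      push_neg at hcon
      rw [Finset.sum_eq_zero (fun α hα => by rw [hcon α hα]; ring)] at hq3
      norm_num at hq3
    have := Phi_pos d k hρ q.1 q.2 this
    simpa using this
  · intro z hz a h1 h2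
    exact hqmin ⟨by simpa [Metric.mem_closedBall] using hz, h1, h2⟩

lemma int_ge {ρ : ℝ} (hρ : 0 < ρ) {ε : ℝ}
    (hε : ∀ z : Eu d, ‖z‖ ≤ (d : ℝ) → ∀ a : (Fin d → Fin (k + 1)) → ℝ,
      (∀ α, α ∉ Adm d k → a α = 0) → (∑ α ∈ Adm d k, a α ^ 2 = 1) →
      ε ≤ Phi d k ρ (z, a))
    (z : Eu d) (hz : ‖z‖ ≤ (d : ℝ)) (a : (Fin d → Fin (k + 1)) → ℝ) :
    ε * (∑ α ∈ Adm d k, a α ^ 2) ≤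
      ∫ y in Metric.ball (0 : Eu d) ρ, (pol d k z a y) ^ 2 := by
  classical
  set s2 : ℝ := ∑ α ∈ Adm d k, a α ^ 2 with hs2
  have hs2nn : 0 ≤ s2 := Finset.sum_nonneg (fun α _ => sq_nonneg _)
  rcases eq_or_lt_of_le hs2nn with heq | hpos
  · have hz0 : ∀ α ∈ Adm d k, a α = 0 := by
      intro α hα
      have := (Finset.sum_eq_zero_iff_of_nonneg (fun β _ => sq_nonneg (a β))).1 heq.symm α hα
      exact pow_eq_zero_iff (n := 2) (by norm_num) |>.1 this
    have hpol : ∀ y : Eu d, pol d k z a y = 0 := by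
      intro y
      exact Finset.sum_eq_zero (fun α hα => by rw [hz0 α hα]; ring)
    simp only [hpol]
    simp [← heq]
  · set s : ℝ := Real.sqrt s2 with hs
    have hspos : 0 < s := Real.sqrt_pos.2 hpos
    have hssq : s ^ 2 = s2 := Real.sq_sqrt hs2nn
    set a' : (Fin d → Fin (k + 1)) → ℝ :=
      fun α => if α ∈ Adm d k then a α / s else 0 with ha'
    have h1 : ∀ α, α ∉ Adm d k → a' α = 0 := fun α hα => by simp [ha', hα]
    have h2 : ∑ α ∈ Adm d k, a' α ^ 2 = 1 := by
      have hterm : ∀ α ∈ Adm d k, a' α ^ 2 = a α ^ 2 / s2 := by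
        intro α hα
        rw [ha']
        simp only [if_pos hα]
        rw [div_pow, hssq]
      rw [Finset.sum_congr rfl hterm, ← Finset.sum_div, ← hs2, div_self hpos.ne']
    have hpol : ∀ y : Eu d, pol d k z a y = s * pol d k z a' y := by
      intro y
      rw [pol, pol, Finset.mul_sum]
      refine Finset.sum_congr rfl (fun α hα => ?_)
      rw [ha']
      simp only [if_pos hα]
      rw [← mul_assoc, mul_div_cancel₀ _ hspos.ne']
    have hint : ∫ y in Metric.ball (0 : Eu d) ρ, (pol d k z a y) ^ 2 =
        s2 * Phi d k ρ (z, a') := by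
      rw [Phi]
      simp only [hpol]
      rw [← integral_const_mul]
      congr 1
      funext y
      rw [← hssq]; ring
    rw [hint]
    have := hε z hz a' h1 h2
    have hm := mul_le_mul_of_nonneg_left this hs2nn
    linarith

lemma cov {h ρ : ℝ} (hh : 0 < h) (x₀ : Eu d) (f : Eu d → ℝ) :
    ∫ x in Metric.ball x₀ (ρ * h), f x =
      h ^ d * ∫ y in Metric.ball (0 : Eu d) ρ, f (x₀ + h • y) := by
  set φ : Eu d → ℝ := (Metric.ball x₀ (ρ * h)).indicator f with hφ
  have h1 : ∫ x in Metric.ball x₀ (ρ * h), f x = ∫ x, φ x := by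
    rw [hφ, integral_indicator measurableSet_ball]
  have h2 : ∫ x, φ x = ∫ x, φ (x₀ + x) := (integral_add_left_eq_self φ x₀).symm
  have h3 : ∫ y, φ (x₀ + h • y) = |((h ^ d)⁻¹ : ℝ)| * ∫ x, φ (x₀ + x) := by
    have := MeasureTheory.Measure.integral_comp_smul (μ := volume)
      (fun x => φ (x₀ + x)) h
    rw [this]
    simp [finrank_euclideanSpace_fin, smul_eq_mul]
  have h4 : ∀ y : Eu d, φ (x₀ + h • y) =
      (Metric.ball (0 : Eu d) ρ).indicator (fun y => f (x₀ + h • y)) y := by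
    intro y
    have hmem : (x₀ + h • y ∈ Metric.ball x₀ (ρ * h)) ↔ y ∈ Metric.ball (0 : Eu d) ρ := by
      rw [Metric.mem_ball, Metric.mem_ball, dist_eq_norm, dist_eq_norm,
        add_sub_cancel_left, sub_zero, norm_smul, Real.norm_of_nonneg hh.le,
        mul_comm ρ h]
      exact mul_lt_mul_iff_right₀ hh
    by_cases hy : y ∈ Metric.ball (0 : Eu d) ρ
    · rw [Set.indicator_of_mem hy, hφ, Set.indicator_of_mem (hmem.2 hy)]
    · rw [Set.indicator_of_notMem hy, hφ, Set.indicator_of_notMem (fun hc => hy (hmem.1 hc))]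
  have h5 : ∫ y in Metric.ball (0 : Eu d) ρ, f (x₀ + h • y) = ∫ y, φ (x₀ + h • y) := by
    simp only [h4]
    rw [integral_indicator measurableSet_ball]
  rw [h1, h2, h5, h3, ← mul_assoc]
  rw [abs_of_nonneg (inv_nonneg.2 (pow_nonneg hh.le d)), mul_inv_cancel₀ (by positivity), one_mul]

lemma centroid_bound {F : Set (Eu d)} (hFo : IsOpen F) (hFb : Bornology.IsBounded F)
    (hFne : F.Nonempty) (xF : Eu d) (hc : ∀ i : Fin d, ∫ x in F, (x i - xF i) = 0)
    {x : Eu d} (hx : x ∈ F) (i : Fin d) : |x i - xF i| ≤ Metric.diam F := by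
  have hμpos : 0 < volume F := hFo.measure_pos volume hFne
  have hμfin : volume F < ⊤ := hFb.measure_lt_top
  set v : ℝ := (volume F).toReal with hv
  have hvpos : 0 < v := ENNReal.toReal_pos hμpos.ne' hμfin.ne
  have hint : IntegrableOn (fun y : Eu d => y i - xF i) F := by
    refine integrableOn_of_cont d _ ?_ hFb
    exact ((EuclideanSpace.proj i).continuous).sub continuous_const
  have hkey : ∫ y in F, (x i - y i) = (x i - xF i) * v := by
    have heq : (fun y : Eu d => x i - y i) =
        fun y : Eu d => (x i - xF i) - (y i - xF i) := funext fun y => by ring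
    rw [heq]
    rw [integral_sub (integrableOn_const (C := x i - xF i) hμfin.ne) hint, hc i, sub_zero,
      setIntegral_const, measureReal_def, smul_eq_mul, mul_comm]
  have hbound : ‖∫ y in F, (x i - y i)‖ ≤ Metric.diam F * v := by
    refine norm_setIntegral_le_of_norm_le_const hμfin (fun y hy => ?_)
    rw [Real.norm_eq_abs]
    calc |x i - y i| ≤ dist x y := abs_coord_sub_le_dist d x y i
      _ ≤ Metric.diam F := Metric.dist_le_diam_of_mem hFb hx hy
  rw [hkey, Real.norm_eq_abs, abs_mul, abs_of_pos hvpos] at hbound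
  exact le_of_mul_le_mul_right hbound hvpos

lemma sqrt_pow_nat {h : ℝ} (hh : 0 ≤ h) (d : ℕ) :
    Real.sqrt (h ^ d) = h ^ ((d : ℝ) / 2) := by
  rw [Real.sqrt_eq_rpow, ← Real.rpow_natCast h d, ← Real.rpow_mul hh, mul_one_div]

end Stmt18


open Stmt18 in
/-- Norm equivalence between the `L²(F)` norm of a polynomial expanded in the scaled
monomial basis `M_k(F) = {((x - x_F)/h_F)^α : |α| ≤ k}` and the `ℓ²` norm of its
coefficient vector: `h_F^{d/2} ‖g⃗‖_{ℓ²} ≂ ‖g‖_{0,F}`, with constants depending only on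
the dimension `d` (`= n - j` after identifying the `(n-j)`-dimensional face `F` with a
subset of `ℝ^{n-j}`), the degree `k`, and the chunkiness parameter `ρ` of `F`; `x_F` is
the centroid of `F` and `h_F = diam F`.  The exponents are indexed by the finite set
`A = {α : Fin d → Fin (k+1), Σ α_i ≤ k}`. -/
theorem stmt18 (d k : ℕ) (ρ : ℝ) (hρ : 0 < ρ) :
    ∃ c > 0, ∃ C > 0, ∀ F : Set (Eu d), IsOpen F → Bornology.IsBounded F → F.Nonempty →
      (∃ x₀ : Eu d, Metric.ball x₀ (ρ * Metric.diam F) ⊆ F ∧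
        ∀ x ∈ F, ∀ y ∈ Metric.ball x₀ (ρ * Metric.diam F), segment ℝ x y ⊆ F) →
      ∀ xF : Eu d,
        -- `x_F` is the centroid of `F`:
        (∀ i : Fin d, ∫ x in F, (x i - xF i) = 0) →
      ∀ coeff : (Fin d → Fin (k + 1)) → ℝ,
        (c * Metric.diam F ^ ((d : ℝ) / 2) *
            Real.sqrt (∑ α ∈ Finset.univ.filter
                (fun α : Fin d → Fin (k + 1) => ∑ i, (α i : ℕ) ≤ k), coeff α ^ 2)
          ≤ Real.sqrt (∫ x in F,
              (∑ α ∈ Finset.univ.filter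
                  (fun α : Fin d → Fin (k + 1) => ∑ i, (α i : ℕ) ≤ k),
                coeff α * ∏ i, ((x i - xF i) / Metric.diam F) ^ (α i : ℕ)) ^ 2)) ∧
        Real.sqrt (∫ x in F,
            (∑ α ∈ Finset.univ.filter
                (fun α : Fin d → Fin (k + 1) => ∑ i, (α i : ℕ) ≤ k),
              coeff α * ∏ i, ((x i - xF i) / Metric.diam F) ^ (α i : ℕ)) ^ 2)
          ≤ C * Metric.diam F ^ ((d : ℝ) / 2) *
            Real.sqrt (∑ α ∈ Finset.univ.filter
                (fun α : Fin d → Fin (k + 1) => ∑ i, (α i : ℕ) ≤ k), coeff α ^ 2) := by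
  have hAdm : ∀ (d' : ℕ), (Finset.univ.filter
      (fun α : Fin d' → Fin (k + 1) => ∑ i, (α i : ℕ) ≤ k)) = Adm d' k := fun _ => rfl
  rcases Nat.eq_zero_or_pos d with hd0 | hd1
  · -- dimension 0
    subst hd0
    refine ⟨1, one_pos, 1, one_pos, ?_⟩
    intro F hFo hFb hFne hstar xF hcent coeff
    have hsub : ∀ x y : Eu 0, x = y := fun x y => PiLp.ext fun i => Fin.elim0 i
    have hFuniv : F = Set.univ := Set.eq_univ_iff_forall.2 fun x => by
      obtain ⟨y, hy⟩ := hFne; rwa [hsub x y]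
    have hdiam : Metric.diam F = 0 :=
      Metric.diam_subsingleton (fun x _ y _ => hsub x y)
    have hvol : volume (Set.univ : Set (Eu 0)) = 1 := by
      have hmp := EuclideanSpace.volume_preserving_symm_measurableEquiv_toLp (Fin 0)
      have := hmp.measure_preimage (MeasurableSet.univ (α := Fin 0 → ℝ)).nullMeasurableSet
      simpa [MeasureTheory.volume_pi, Measure.pi_univ] using this
    have hA : (Finset.univ.filter
        (fun α : Fin 0 → Fin (k + 1) => ∑ i, (α i : ℕ) ≤ k)) =
        {(fun i => i.elim0 : Fin 0 → Fin (k + 1))} := by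
      apply Finset.eq_singleton_iff_unique_mem.2
      constructor
      · refine Finset.mem_filter.2 ⟨Finset.mem_univ _, ?_⟩
        simp
      · intro α _
        exact Subsingleton.elim _ _
    have hint : ∀ cst : ℝ, (∫ _x in F, cst) = cst := by
      intro cst
      rw [setIntegral_const, hFuniv, measureReal_def, hvol]
      simp
    have hkey : Real.sqrt (∫ x in F,
        (∑ α ∈ Finset.univ.filter
            (fun α : Fin 0 → Fin (k + 1) => ∑ i, (α i : ℕ) ≤ k),
          coeff α * ∏ i, ((x i - xF i) / Metric.diam F) ^ (α i : ℕ)) ^ 2) =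
        1 * Metric.diam F ^ (((0:ℕ) : ℝ) / 2) *
          Real.sqrt (∑ α ∈ Finset.univ.filter
            (fun α : Fin 0 → Fin (k + 1) => ∑ i, (α i : ℕ) ≤ k), coeff α ^ 2) := by
      simp only [hA, Finset.sum_singleton]
      simp only [Finset.univ_eq_empty, Finset.prod_empty, mul_one, Nat.cast_zero,
        zero_div, Real.rpow_zero, one_mul]
      rw [hint]
    exact ⟨le_of_eq hkey.symm, le_of_eq hkey⟩
  · -- d ≥ 1
    obtain ⟨ε, hε, hεmin⟩ := exists_eps d k hρ
    set N : ℝ := ((Adm d k).card : ℝ) with hN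
    set Cd : ℝ := (volume (Metric.ball (0 : Eu d) 1)).toReal with hCd
    have hCdpos : 0 < Cd := by
      rw [hCd]
      exact ENNReal.toReal_pos
        (Metric.isOpen_ball.measure_pos volume (Metric.nonempty_ball.2 one_pos)).ne'
        measure_ball_lt_top.ne
    have hNpos : 0 < N := by
      rw [hN]
      exact_mod_cast Finset.card_pos.2 ⟨_, zero_mem_Adm d k⟩
    refine ⟨Real.sqrt ε, Real.sqrt_pos.2 hε, Real.sqrt (N * Cd) + 1, add_pos_of_nonneg_of_pos (Real.sqrt_nonneg _) one_pos, ?_⟩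
    intro F hFo hFb hFne hstar xF hcent coeff
    simp only [hAdm d]
    set h : ℝ := Metric.diam F with hdiam
    -- h > 0
    have hhpos : 0 < h := by
      obtain ⟨xw, hxw⟩ := hFne
      obtain ⟨r, hr, hball⟩ := Metric.isOpen_iff.1 hFo xw hxw
      set i0 : Fin d := ⟨0, hd1⟩
      set xw' : Eu d := xw + (r / 2) • EuclideanSpace.single i0 (1 : ℝ) with hxw'
      have hdist : dist xw' xw = r / 2 := by
        rw [dist_eq_norm, hxw', add_sub_cancel_left, norm_smul, EuclideanSpace.norm_single]
        rw [Real.norm_of_nonneg (by linarith), norm_one, mul_one]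
      have hx'F : xw' ∈ F := by
        apply hball
        rw [Metric.mem_ball, hdist]
        linarith
      have h2 := Metric.dist_le_diam_of_mem hFb hx'F hxw
      rw [hdist] at h2
      rw [hdiam]
      linarith
    obtain ⟨x₀, hballF, _hstar2⟩ := hstar
    have hρh : 0 < ρ * h := mul_pos hρ hhpos
    have hx₀F : x₀ ∈ F := hballF (Metric.mem_ball_self hρh)
    have hcb : ∀ x ∈ F, ∀ i : Fin d, |x i - xF i| ≤ h :=
      fun x hx i => centroid_bound d hFo hFb hFne xF hcent hx i
    set g : Eu d → ℝ :=
      fun x => ∑ α ∈ Adm d k, coeff α * ∏ i, ((x i - xF i) / h) ^ (α i : ℕ) with hg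
    have hgdef : ∀ x : Eu d,
        (∑ α ∈ Adm d k, coeff α * ∏ i, ((x i - xF i) / h) ^ (α i : ℕ)) = g x :=
      fun x => rfl
    simp only [hgdef]
    have hgcont : Continuous g := by
      rw [hg]
      refine continuous_finset_sum _ (fun α _ => Continuous.mul continuous_const ?_)
      refine continuous_finset_prod _ (fun i _ => Continuous.pow ?_ _)
      exact (((EuclideanSpace.proj (𝕜 := ℝ) i).continuous).sub continuous_const).div_const h
    have hgint : IntegrableOn (fun x => g x ^ 2) F :=
      integrableOn_of_cont d _ (hgcont.pow 2) hFb
    set S2 : ℝ := ∑ α ∈ Adm d k, coeff α ^ 2 with hS2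
    have hS2nn : 0 ≤ S2 := Finset.sum_nonneg fun α _ => sq_nonneg _
    set X : ℝ := ∫ x in F, g x ^ 2 with hX
    -- lower bound
    set z : Eu d := h⁻¹ • (xF - x₀) with hzd
    have hzi : ∀ i : Fin d, z i = h⁻¹ * (xF i - x₀ i) := by
      intro i
      rw [hzd, PiLp.smul_apply, PiLp.sub_apply, smul_eq_mul]
    have hznorm : ‖z‖ ≤ (d : ℝ) := by
      have hw : ∀ i : Fin d, ‖(xF - x₀) i‖ ≤ h := by
        intro i
        rw [PiLp.sub_apply, Real.norm_eq_abs, abs_sub_comm]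
        exact hcb x₀ hx₀F i
      have h1 : ‖xF - x₀‖ ≤ (d : ℝ) * h := by
        rw [EuclideanSpace.norm_eq]
        have hb : ∑ i, ‖(xF - x₀) i‖ ^ 2 ≤ (d : ℝ) * h ^ 2 := by
          calc ∑ i, ‖(xF - x₀) i‖ ^ 2 ≤ ∑ _i : Fin d, h ^ 2 :=
                Finset.sum_le_sum fun i _ => pow_le_pow_left₀ (norm_nonneg _) (hw i) 2
            _ = (d : ℝ) * h ^ 2 := by simp [mul_comm]
        refine (Real.sqrt_le_sqrt hb).trans ?_
        have hd1' : (1 : ℝ) ≤ (d : ℝ) := by exact_mod_cast hd1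
        have h3 : (d : ℝ) * h ^ 2 ≤ ((d : ℝ) * h) ^ 2 := by nlinarith [sq_nonneg h]
        refine (Real.sqrt_le_sqrt h3).trans ?_
        rw [Real.sqrt_sq (mul_nonneg (Nat.cast_nonneg d) hhpos.le)]
      rw [hzd, norm_smul, norm_inv, Real.norm_of_nonneg hhpos.le, inv_mul_le_iff₀ hhpos]
      calc ‖xF - x₀‖ ≤ (d : ℝ) * h := h1
        _ = h * (d : ℝ) := mul_comm _ _
    have hpt : ∀ y : Eu d, g (x₀ + h • y) = pol d k z coeff y := by
      intro y
      rw [hg, pol]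
      refine Finset.sum_congr rfl fun α _ => ?_
      congr 1
      refine Finset.prod_congr rfl fun i _ => ?_
      congr 1
      rw [PiLp.add_apply, PiLp.smul_apply, smul_eq_mul, hzi i]
      field_simp
      ring
    have hlow1 : ε * S2 ≤ ∫ y in Metric.ball (0 : Eu d) ρ, pol d k z coeff y ^ 2 :=
      int_ge d k hρ hεmin z hznorm coeff
    have hlow2 : (∫ x in Metric.ball x₀ (ρ * h), g x ^ 2) =
        h ^ d * ∫ y in Metric.ball (0 : Eu d) ρ, pol d k z coeff y ^ 2 := by
      rw [cov d hhpos x₀ (fun x => g x ^ 2)]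
      congr 1
      simp only [hpt]
    have hlow3 : (∫ x in Metric.ball x₀ (ρ * h), g x ^ 2) ≤ X := by
      rw [hX]
      exact setIntegral_mono_set hgint
        (Filter.Eventually.of_forall fun x => sq_nonneg _)
        (HasSubset.Subset.eventuallyLE hballF)
    have hXlow : ε * S2 * h ^ d ≤ X := by
      have hhd : (0:ℝ) ≤ h ^ d := pow_nonneg hhpos.le d
      have := mul_le_mul_of_nonneg_left hlow1 hhd
      rw [← hlow2] at this
      calc ε * S2 * h ^ d = h ^ d * (ε * S2) := by ring
        _ ≤ ∫ x in Metric.ball x₀ (ρ * h), g x ^ 2 := this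
        _ ≤ X := hlow3
    have hfinL : Real.sqrt ε * h ^ ((d : ℝ) / 2) * Real.sqrt S2 ≤ Real.sqrt X := by
      have h1 : Real.sqrt (ε * S2 * h ^ d) ≤ Real.sqrt X := Real.sqrt_le_sqrt hXlow
      rw [Real.sqrt_mul (mul_nonneg hε.le hS2nn), Real.sqrt_mul hε.le, sqrt_pow_nat hhpos.le] at h1
      calc Real.sqrt ε * h ^ ((d : ℝ) / 2) * Real.sqrt S2
          = Real.sqrt ε * Real.sqrt S2 * h ^ ((d : ℝ) / 2) := by ring
        _ ≤ Real.sqrt X := h1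
    -- upper bound
    have hup1 : ∀ x ∈ F, g x ^ 2 ≤ N * S2 := by
      intro x hx
      have habs : |g x| ≤ ∑ α ∈ Adm d k, |coeff α| := by
        rw [hg]
        refine (Finset.abs_sum_le_sum_abs _ _).trans ?_
        refine Finset.sum_le_sum fun α _ => ?_
        rw [abs_mul]
        have hpr : |∏ i, ((x i - xF i) / h) ^ (α i : ℕ)| ≤ 1 := by
          rw [Finset.abs_prod]
          refine Finset.prod_le_one (fun i _ => abs_nonneg _) (fun i _ => ?_)
          rw [abs_pow]
          refine pow_le_one₀ (abs_nonneg _) ?_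
          rw [abs_div, abs_of_pos hhpos, div_le_one hhpos]
          exact hcb x hx i
        calc |coeff α| * |∏ i, ((x i - xF i) / h) ^ (α i : ℕ)| ≤ |coeff α| * 1 :=
              mul_le_mul_of_nonneg_left hpr (abs_nonneg _)
          _ = |coeff α| := mul_one _
      have hCS : (∑ α ∈ Adm d k, |coeff α|) ^ 2 ≤ N * S2 := by
        have hcs := Finset.sum_mul_sq_le_sq_mul_sq (Adm d k)
          (fun _ => (1 : ℝ)) (fun α => |coeff α|)
        simpa [hN, hS2, sq_abs, Finset.sum_const, nsmul_eq_mul, one_mul] using hcs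
      calc g x ^ 2 = |g x| ^ 2 := (sq_abs _).symm
        _ ≤ (∑ α ∈ Adm d k, |coeff α|) ^ 2 := pow_le_pow_left₀ (abs_nonneg _) habs 2
        _ ≤ N * S2 := hCS
    have hv : (volume F).toReal ≤ Cd * h ^ d := by
      have hsub2 : F ⊆ Metric.closedBall x₀ h := fun x hx =>
        Metric.mem_closedBall.2 (Metric.dist_le_diam_of_mem hFb hx hx₀F)
      have h1 : volume F ≤ volume (Metric.closedBall x₀ h) := measure_mono hsub2
      have h2 : volume (Metric.closedBall x₀ h) =
          ENNReal.ofReal (h ^ d) * volume (Metric.ball (0 : Eu d) 1) := by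
        have h3 := Measure.addHaar_closedBall (μ := volume) x₀ hhpos.le
        rwa [finrank_euclideanSpace_fin] at h3
      calc (volume F).toReal ≤ (volume (Metric.closedBall x₀ h)).toReal :=
            ENNReal.toReal_mono measure_closedBall_lt_top.ne h1
        _ = h ^ d * Cd := by
            rw [h2, ENNReal.toReal_mul, ENNReal.toReal_ofReal (pow_nonneg hhpos.le d), hCd]
        _ = Cd * h ^ d := mul_comm _ _
    have hXup : X ≤ N * S2 * (Cd * h ^ d) := by
      have hFfin : volume F < ⊤ := hFb.measure_lt_top
      have h1 : X ≤ ∫ _x in F, (N * S2) := by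
        rw [hX]
        exact setIntegral_mono_on hgint (integrableOn_const hFfin.ne)
          hFo.measurableSet hup1
      rw [setIntegral_const, smul_eq_mul] at h1
      have h2 : (volume F).toReal * (N * S2) ≤ (Cd * h ^ d) * (N * S2) :=
        mul_le_mul_of_nonneg_right hv (mul_nonneg hNpos.le hS2nn)
      calc X ≤ (volume F).toReal * (N * S2) := h1
        _ ≤ (Cd * h ^ d) * (N * S2) := h2
        _ = N * S2 * (Cd * h ^ d) := by ring
    have hfinR : Real.sqrt X ≤ (Real.sqrt (N * Cd) + 1) * h ^ ((d : ℝ) / 2) *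
        Real.sqrt S2 := by
      have h1 : Real.sqrt X ≤ Real.sqrt (N * S2 * (Cd * h ^ d)) := Real.sqrt_le_sqrt hXup
      have h2 : N * S2 * (Cd * h ^ d) = (N * Cd) * (h ^ d) * S2 := by ring
      rw [h2, Real.sqrt_mul (mul_nonneg (mul_nonneg hNpos.le hCdpos.le) (pow_nonneg hhpos.le d)),
        Real.sqrt_mul (mul_nonneg hNpos.le hCdpos.le), sqrt_pow_nat hhpos.le] at h1
      have h3 : Real.sqrt (N * Cd) * h ^ ((d : ℝ) / 2) * Real.sqrt S2 ≤
          (Real.sqrt (N * Cd) + 1) * h ^ ((d : ℝ) / 2) * Real.sqrt S2 := by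
        have h4 : (0:ℝ) ≤ h ^ ((d : ℝ) / 2) := Real.rpow_nonneg hhpos.le _
        have h5 : Real.sqrt (N * Cd) * h ^ ((d : ℝ) / 2) ≤
            (Real.sqrt (N * Cd) + 1) * h ^ ((d : ℝ) / 2) :=
          mul_le_mul_of_nonneg_right (by linarith) h4
        exact mul_le_mul_of_nonneg_right h5 (Real.sqrt_nonneg S2)
      exact h1.trans h3
    exact ⟨hfinL, hfinR⟩
end
end

section
/- For 2m ≤ k < 3m-1, let W_k(K) be the modified virtual element space defined by the constraint (v - Π^K v, q)_K = 0 for all q in the L²-orthogonal complement P⊥_{k-2m}(K) of P_{k-2m}(K) within P_{m-1}(K). Then for every v ∈ W_k(K), the L² projection onto P_{m-1}(K) is computable via Q_{m-1}^K v = Q_{k-2m}^K v + Q_{m-1}^K Π^K v - Q_{k-2m}^K Π^K v. -/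
open scoped RealInnerProductSpace
noncomputable section

/-- Computability of the `L²` projection onto `P_{m-1}(K)` in the modified virtual
element space `W_k(K)` for `2m ≤ k < 3m-1`.  Abstract setting in the Hilbert space
`L = L²(K)`: `P₁` is (the image in `L` of) `P_{m-1}(K)`, `P₂ ≤ P₁` is `P_{k-2m}(K)`,
`Q₁ = Q_{m-1}^K` and `Q₂ = Q_{k-2m}^K` are the corresponding orthogonal projections,
and `Pv` denotes `Π^K v ∈ L`.  The defining constraint of `W_k(K)` is that `v - Π^K v`
is `L²`-orthogonal to the orthogonal complement `P⊥_{k-2m}(K)` of `P₂` within `P₁`.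
Then `Q_{m-1}^K v = Q_{k-2m}^K v + Q_{m-1}^K Π^K v - Q_{k-2m}^K Π^K v`. -/
theorem stmt19 {L : Type*} [NormedAddCommGroup L] [InnerProductSpace ℝ L]
    (m k : ℕ) (hk₁ : 2 * m ≤ k) (hk₂ : k < 3 * m - 1)
    (P₁ P₂ : Submodule ℝ L) [FiniteDimensional ℝ P₁] [FiniteDimensional ℝ P₂]
    (hsub : P₂ ≤ P₁)
    (v Pv : L)
    (hconstraint : ∀ q ∈ P₁, (Submodule.orthogonalProjectionOnto P₂ q : L) = 0 → ⟪v - Pv, q⟫ = 0) :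
    (Submodule.orthogonalProjectionOnto P₁ v : L)
      = (Submodule.orthogonalProjectionOnto P₂ v : L) + (Submodule.orthogonalProjectionOnto P₁ Pv : L)
        - (Submodule.orthogonalProjectionOnto P₂ Pv : L) := by
  set Q₁ := Submodule.orthogonalProjectionOnto P₁
  set Q₂ := Submodule.orthogonalProjectionOnto P₂
  have hQ₂Q₁ : ∀ x : L, (Q₂ ((Q₁ x : L)) : L) = (Q₂ x : L) := by
    intro x
    have h : Q₂ (x - (Q₁ x : L)) = 0 := by
      rw [Submodule.orthogonalProjectionOnto_eq_zero_iff]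
      exact Submodule.orthogonal_le hsub (Submodule.sub_starProjection_mem_orthogonal x)
    have h2 : (Q₂ x : L) - (Q₂ ((Q₁ x : L)) : L) = 0 := by
      have := congrArg Subtype.val h
      push_cast [map_sub] at this
      simpa using this
    exact (sub_eq_zero.mp h2).symm
  set w := v - Pv with hw
  set q : L := (Q₁ w : L) - (Q₂ w : L) with hq
  have hqP₁ : q ∈ P₁ := sub_mem (Q₁ w).2 (hsub (Q₂ w).2)
  have hQ₂q : (Q₂ q : L) = 0 := by
    have h2 : (Q₂ q : L) = (Q₂ ((Q₁ w : L)) : L) - (Q₂ ((Q₂ w : L)) : L) := by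
      rw [hq, map_sub]; rfl
    have h1 : (Q₂ ((Q₂ w : L)) : L) = (Q₂ w : L) := congrArg Subtype.val (Submodule.orthogonalProjectionOnto_mem_subspace_eq_self (Q₂ w))
    rw [h2, hQ₂Q₁, h1, sub_self]
  have hwq : ⟪w, q⟫ = 0 := hconstraint q hqP₁ hQ₂q
  have hqorth : q ∈ P₂ᗮ := Submodule.orthogonalProjectionOnto_eq_zero_iff.mp (Subtype.ext hQ₂q)
  have h0 : ⟪q, w - (Q₁ w : L)⟫ = 0 :=
    Submodule.sub_starProjection_mem_orthogonal (K := P₁) w q hqP₁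
  have hA : ⟪q, (Q₁ w : L)⟫ = 0 := by
    rw [inner_sub_right] at h0
    have : ⟪q, w⟫ = 0 := by rw [real_inner_comm]; exact hwq
    linarith
  have hB : ⟪q, (Q₂ w : L)⟫ = 0 := by
    rw [real_inner_comm]
    exact hqorth (Q₂ w : L) (Q₂ w).2
  have hq0 : q = 0 := by
    have : ⟪q, q⟫ = 0 := by
      rw [hq, inner_sub_right] at *
      linarith
    exact inner_self_eq_zero.mp this
  have hmain : (Q₁ w : L) = (Q₂ w : L) := sub_eq_zero.mp hq0
  have e1 : (Q₁ w : L) = (Q₁ v : L) - (Q₁ Pv : L) := by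
    have := congrArg Subtype.val (map_sub Q₁ v Pv)
    push_cast at this
    rw [hw]; exact this
  have e2 : (Q₂ w : L) = (Q₂ v : L) - (Q₂ Pv : L) := by
    have := congrArg Subtype.val (map_sub Q₂ v Pv)
    push_cast at this
    rw [hw]; exact this
  rw [e1, e2] at hmain
  have : (Q₁ v : L) = (Q₂ v : L) - (Q₂ Pv : L) + (Q₁ Pv : L) := by
    rw [← sub_eq_iff_eq_add, hmain]
  rw [this]; abel
end
end
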